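/- For every λ ∈ (0, 1), the 4×4 complex matrix M := I ⊗ ((I + σ3)/2) + (1/2)(σ1⊗σ1) + ((1 − 2λ)/2)(σ2⊗σ2) is not positive semidefinite. More precisely, its eigenvalues are (1 + √(1 + 4λ²))/2, (1 − √(1 + 4λ²))/2, (1 + √(1 + 4(1−λ)²))/2, and (1 − √(1 + 4(1−λ)²))/2, and the eigenvalue (1 − √(1 + 4λ²))/2 is strictly negative. -/

import Mathlib

open Matrix Kronecker ComplexOrder Polynomial

noncomputable def σ1 : Matrix (Fin 2) (Fin 2) ℂ := !![0, 1; 1, 0]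
noncomputable def σ2 : Matrix (Fin 2) (Fin 2) ℂ := !![0, -Complex.I; Complex.I, 0]
noncomputable def σ3 : Matrix (Fin 2) (Fin 2) ℂ := !![1, 0; 0, -1]

private lemma quadFactor (a b p : ℝ) (h1 : a + b = 1) (h2 : a * b = -p) :
    (X - C ((a : ℝ) : ℂ)) * (X - C ((b : ℝ) : ℂ)) = X ^ 2 - X - C (((p : ℝ)) : ℂ) := by
  have e1 : ((a : ℂ)) + b = 1 := by exact_mod_cast h1
  have e2 : ((a : ℂ)) * b = -(p : ℂ) := by exact_mod_cast h2
  calc (X - C (a : ℂ)) * (X - C (b : ℂ))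
      = X ^ 2 - C ((a : ℂ) + b) * X + C ((a : ℂ) * b) := by rw [C_add, C_mul]; ring
    _ = X ^ 2 - X - C (p : ℂ) := by rw [e1, e2, map_neg, Polynomial.C_1]; ring

set_option maxHeartbeats 1000000 in
private lemma charpoly4 (l : ℂ) :
    (!![1,0,0,l; 0,0,1-l,0; 0,1-l,1,0; l,0,0,0] : Matrix (Fin 4) (Fin 4) ℂ).charpoly
    = (X ^ 2 - X - C (l ^ 2)) * (X ^ 2 - X - C ((1 - l) ^ 2)) := by
  rw [Matrix.charpoly]
  have h : (!![1,0,0,l; 0,0,1-l,0; 0,1-l,1,0; l,0,0,0] : Matrix (Fin 4) (Fin 4) ℂ).charmatrix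
      = !![X - C 1, 0, 0, -C l; 0, X, -C (1-l), 0; 0, -C (1-l), X - C 1, 0; -C l, 0, 0, X] := by
    ext i j
    fin_cases i <;> fin_cases j <;>
      simp [Matrix.charmatrix_apply, Matrix.diagonal, Matrix.vecHead, Matrix.vecTail]
  rw [h]
  simp [Matrix.det_succ_row_zero, Fin.sum_univ_succ, Matrix.det_fin_three,
    Matrix.cons_val_succ, Matrix.vecHead, Matrix.vecTail]
  simp only [show (Fin.succAbove (3:Fin 4) (2:Fin 3)) = (2:Fin 4) from rfl, Matrix.cons_val_two,
    Matrix.cons_val_zero, Matrix.vecHead, Matrix.vecTail]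
  simp [Matrix.vecHead, Matrix.vecTail]
  ring

set_option maxHeartbeats 1000000 in
private lemma meq (lam : ℝ) :
    Matrix.reindex finProdFinEquiv finProdFinEquiv
    (((1 : Matrix (Fin 2) (Fin 2) ℂ)
          ⊗ₖ ((((1 : ℝ) / 2 : ℝ) : ℂ) • ((1 : Matrix (Fin 2) (Fin 2) ℂ) + σ3)))
        + (((1 : ℝ) / 2 : ℝ) : ℂ) • (σ1 ⊗ₖ σ1)
        + (((1 - 2 * lam) / 2 : ℝ) : ℂ) • (σ2 ⊗ₖ σ2))
    = !![1,0,0,(lam:ℂ); 0,0,1-lam,0; 0,1-lam,1,0; (lam:ℂ),0,0,0] := by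
  ext i j
  fin_cases i <;> fin_cases j <;>
    · rw [Matrix.reindex_apply, Matrix.submatrix_apply]
      norm_num [finProdFinEquiv_symm_apply, σ1, σ2, σ3, Matrix.one_apply,
        Fin.divNat, Fin.modNat]
      try ring_nf
      try simp [Complex.ext_iff]

private lemma notPSD4 (lam : ℝ) (h0 : 0 < lam) :
    ¬ (!![1,0,0,(lam:ℂ); 0,0,1-lam,0; 0,1-lam,1,0; (lam:ℂ),0,0,0] :
        Matrix (Fin 4) (Fin 4) ℂ).PosSemidef := by
  intro h
  have := h.dotProduct_mulVec_nonneg ![(lam:ℂ),0,0,-1]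
  simp [Matrix.mulVec, dotProduct, Fin.sum_univ_four, Matrix.vecHead,
    Matrix.vecTail] at this
  have h2 : (lam * lam : ℝ) ≤ 0 := by exact_mod_cast this
  nlinarith

/-- for λ ∈ (0,1) the matrix `I ⊗ ((I+σ3)/2) + ½ σ1⊗σ1 + ((1−2λ)/2) σ2⊗σ2`
is not positive semidefinite; its characteristic polynomial has the four stated roots and
(1 − √(1+4λ²))/2 < 0. -/
theorem stmt14 (lam : ℝ) (hlam : lam ∈ Set.Ioo (0 : ℝ) 1) :
    ¬ (((1 : Matrix (Fin 2) (Fin 2) ℂ)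
          ⊗ₖ ((((1 : ℝ) / 2 : ℝ) : ℂ) • ((1 : Matrix (Fin 2) (Fin 2) ℂ) + σ3)))
        + (((1 : ℝ) / 2 : ℝ) : ℂ) • (σ1 ⊗ₖ σ1)
        + (((1 - 2 * lam) / 2 : ℝ) : ℂ) • (σ2 ⊗ₖ σ2)).PosSemidef
    ∧
    (((1 : Matrix (Fin 2) (Fin 2) ℂ)
          ⊗ₖ ((((1 : ℝ) / 2 : ℝ) : ℂ) • ((1 : Matrix (Fin 2) (Fin 2) ℂ) + σ3)))
        + (((1 : ℝ) / 2 : ℝ) : ℂ) • (σ1 ⊗ₖ σ1)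
        + (((1 - 2 * lam) / 2 : ℝ) : ℂ) • (σ2 ⊗ₖ σ2)).charpoly
      = (X - C (((1 + Real.sqrt (1 + 4 * lam ^ 2)) / 2 : ℝ) : ℂ)) *
          (X - C (((1 - Real.sqrt (1 + 4 * lam ^ 2)) / 2 : ℝ) : ℂ)) *
          (X - C (((1 + Real.sqrt (1 + 4 * (1 - lam) ^ 2)) / 2 : ℝ) : ℂ)) *
          (X - C (((1 - Real.sqrt (1 + 4 * (1 - lam) ^ 2)) / 2 : ℝ) : ℂ))
    ∧
    (1 - Real.sqrt (1 + 4 * lam ^ 2)) / 2 < 0 := by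
  obtain ⟨h0, h1⟩ := hlam
  have hs : Real.sqrt (1 + 4 * lam ^ 2) ^ 2 = 1 + 4 * lam ^ 2 :=
    Real.sq_sqrt (by positivity)
  have ht : Real.sqrt (1 + 4 * (1 - lam) ^ 2) ^ 2 = 1 + 4 * (1 - lam) ^ 2 :=
    Real.sq_sqrt (by positivity)
  have hs1 : 1 < Real.sqrt (1 + 4 * lam ^ 2) := by
    nlinarith [Real.sqrt_nonneg (1 + 4 * lam ^ 2)]
  refine ⟨?_, ?_, by linarith⟩
  · intro h
    refine notPSD4 lam h0 ?_
    rw [← meq lam, Matrix.reindex_apply]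
    rwa [Matrix.posSemidef_submatrix_equiv]
  · rw [← Matrix.charpoly_reindex finProdFinEquiv, meq lam, charpoly4]
    rw [show ((lam:ℂ)) ^ 2 = ((lam ^ 2 : ℝ) : ℂ) from by push_cast; ring,
      show (1 - (lam:ℂ)) ^ 2 = (((1 - lam) ^ 2 : ℝ) : ℂ) from by push_cast; ring,
      ← quadFactor ((1 + Real.sqrt (1 + 4 * lam ^ 2)) / 2)
        ((1 - Real.sqrt (1 + 4 * lam ^ 2)) / 2) (lam ^ 2) (by ring) (by nlinarith),
      ← quadFactor ((1 + Real.sqrt (1 + 4 * (1 - lam) ^ 2)) / 2)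
        ((1 - Real.sqrt (1 + 4 * (1 - lam) ^ 2)) / 2) ((1 - lam) ^ 2) (by ring) (by nlinarith)]
    ring
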